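/- Decomposition of a full-moment integral into unit-group pieces: for any 𝒪-valued measure μ on ℤ_p and m ≥ 2, if for each k ≥ 0 there is a measure μ_k on ℤ_p with μ(p^k a + p^{n+k}ℤ_p) = μ_k(a + p^nℤ_p) for all a, n, then ∫_{ℤ_p} x^{m-1} dμ(x) = ∑_{k=0}^∞ p^{k(m-1)} ∫_{ℤ_p^×} x^{m-1} dμ_k(x), the series converging p-adically. -/

import Mathlib

open Filter IsUltrametricDist

lemma aux_reindex {M : Type*} [AddCommMonoid M] (p i : ℕ) (hp : 0 < p) (f : ℕ → M) :
    ∑ b ∈ (Finset.range (p ^ (i + 1))).filter (fun b => p ∣ b), f b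
      = ∑ c ∈ Finset.range (p ^ i), f (p * c) := by
  refine Finset.sum_nbij' (fun b => b / p) (fun c => p * c) ?_ ?_ ?_ ?_ ?_
  · intro b hb
    simp only [Finset.mem_filter, Finset.mem_range] at hb
    simp only [Finset.mem_range]
    exact Nat.div_lt_of_lt_mul (by rw [pow_succ, mul_comm] at hb; exact hb.1)
  · intro c hc
    simp only [Finset.mem_range] at hc
    simp only [Finset.mem_filter, Finset.mem_range]
    exact ⟨by rw [pow_succ, mul_comm (p^i)]; exact (Nat.mul_lt_mul_left hp).2 hc, dvd_mul_right _ _⟩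
  · intro b hb
    simp only [Finset.mem_filter] at hb
    exact Nat.mul_div_cancel' hb.2
  · intro c hc
    exact Nat.mul_div_cancel_left _ hp
  · intro b hb
    simp only [Finset.mem_filter] at hb
    rw [Nat.mul_div_cancel' hb.2]

/-- Decomposition of a full moment integral into unit-group pieces.  Here a bounded
measure on `ℤ_p` with values in a complete ultrametric field `K` (with `‖p‖ < 1`) is
encoded by its values `μ n a` on the cosets `a + p^nℤ_p`, satisfying the distribution
relation.  If measures `μ_k` satisfy `μ(p^k a + p^{n+k}ℤ_p) = μ_k(a + p^nℤ_p)`, and if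
`I = ∫_{ℤ_p} x^{m-1} dμ` and `J k = ∫_{ℤ_p^×} x^{m-1} dμ_k` (as limits of Riemann sums),
then for `m ≥ 2`: `I = ∑_{k=0}^∞ p^{k(m-1)} J k`, the series converging `p`-adically. -/
theorem stmt_17 (p m : ℕ) (hp : p.Prime) (hm : 2 ≤ m) {K : Type*}
    [NontriviallyNormedField K] [CompleteSpace K] [IsUltrametricDist K]
    (hpn : ‖(p : K)‖ < 1)
    (μ : ℕ → ℕ → K) (μk : ℕ → ℕ → ℕ → K)
    (hbdd : ∃ C, ∀ n a, ‖μ n a‖ ≤ C)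
    (hdist : ∀ n a, μ n a = ∑ j ∈ Finset.range p, μ (n + 1) (a + j * p ^ n))
    (hcompat : ∀ k n a, μ (n + k) (p ^ k * a) = μk k n a)
    (I : K)
    (hI : Tendsto (fun n => ∑ a ∈ Finset.range (p ^ n), (a : K) ^ (m - 1) * μ n a)
      atTop (nhds I))
    (J : ℕ → K)
    (hJ : ∀ k, Tendsto (fun n => ∑ a ∈ (Finset.range (p ^ n)).filter (fun a => ¬ p ∣ a),
        (a : K) ^ (m - 1) * μk k n a) atTop (nhds (J k))) :
    HasSum (fun k => (p : K) ^ (k * (m - 1)) * J k) I := by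
  obtain ⟨C, hC⟩ := hbdd
  have hq : m - 1 ≠ 0 := by omega
  set T : ℕ → ℕ → K := fun k i =>
    ∑ b ∈ (Finset.range (p ^ i)).filter (fun b => ¬ p ∣ b), (b : K) ^ (m - 1) * μk k i b
    with hT
  set R : ℕ → ℕ → K := fun k i =>
    ∑ b ∈ Finset.range (p ^ i), (b : K) ^ (m - 1) * μk k i b with hR
  have hμk : ∀ k i b, μk k i b = μ (i + k) (p ^ k * b) := fun k i b => (hcompat k i b).symm
  -- key recursion
  have step : ∀ k i, R k (i + 1) = T k (i + 1) + (p : K) ^ (m - 1) * R (k + 1) i := by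
    intro k i
    have hsplit := Finset.sum_filter_add_sum_filter_not (Finset.range (p ^ (i + 1)))
      (fun b => p ∣ b) (fun b => (b : K) ^ (m - 1) * μk k (i + 1) b)
    have hre := aux_reindex p i hp.pos (fun b => (b : K) ^ (m - 1) * μk k (i + 1) b)
    have hterm : ∀ c, ((p * c : ℕ) : K) ^ (m - 1) * μk k (i + 1) (p * c)
        = (p : K) ^ (m - 1) * ((c : K) ^ (m - 1) * μk (k + 1) i c) := by
      intro c
      have h1 : μk k (i + 1) (p * c) = μk (k + 1) i c := by
        rw [hμk, hμk]
        congr 1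
        · omega
        · ring
      rw [h1]
      push_cast
      ring
    rw [hR, hT]
    simp only
    rw [← hsplit, hre]
    rw [Finset.sum_congr rfl (fun c _ => hterm c), ← Finset.mul_sum]
    ring
  -- telescoped identity
  have main : ∀ n j, j ≤ n → R 0 n
      = ∑ k ∈ Finset.range j, (p : K) ^ (k * (m - 1)) * T k (n - k)
        + (p : K) ^ (j * (m - 1)) * R j (n - j) := by
    intro n j hj
    induction j with
    | zero => simp
    | succ j ih =>
      have hj' : j ≤ n := by omega
      have hnj : n - j = (n - (j + 1)) + 1 := by omega
      rw [ih hj', Finset.sum_range_succ, hnj, step j (n - (j + 1))]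
      have he : (j + 1) * (m - 1) = j * (m - 1) + (m - 1) := by ring
      rw [he, pow_add]
      ring
  have hSn : ∀ n, (∑ a ∈ Finset.range (p ^ n), (a : K) ^ (m - 1) * μ n a)
      = ∑ k ∈ Finset.range n, (p : K) ^ (k * (m - 1)) * T k (n - k) := by
    intro n
    have h0 : (∑ a ∈ Finset.range (p ^ n), (a : K) ^ (m - 1) * μ n a) = R 0 n := by
      apply Finset.sum_congr rfl
      intro a _
      rw [hμk]
      simp
    have hRn0 : R n (n - n) = 0 := by
      simp [hR, Nat.sub_self, zero_pow hq]
    rw [h0, main n n le_rfl, hRn0, mul_zero, add_zero]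
  -- bounds
  have hC0 : 0 ≤ C := le_trans (norm_nonneg _) (hC 0 0)
  have hp1 : ‖(p : K)‖ ≤ 1 := hpn.le
  have hkq : ∀ k : ℕ, k ≤ k * (m - 1) := by
    intro k
    calc k = k * 1 := (mul_one k).symm
    _ ≤ k * (m - 1) := Nat.mul_le_mul_left k (by omega)
  have hppow : ∀ k : ℕ, ‖(p : K) ^ (k * (m - 1))‖ ≤ ‖(p : K)‖ ^ k := by
    intro k
    rw [norm_pow]
    exact pow_le_pow_of_le_one (norm_nonneg _) hp1 (hkq k)
  have htermC : ∀ (k i b : ℕ), ‖(b : K) ^ (m - 1) * μk k i b‖ ≤ C := by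
    intro k i b
    rw [norm_mul, norm_pow]
    have h1 : ‖((b : ℕ) : K)‖ ≤ 1 := norm_natCast_le_one K b
    have h2 : ‖(b : K)‖ ^ (m - 1) ≤ 1 := pow_le_one₀ (norm_nonneg _) h1
    calc ‖(b : K)‖ ^ (m - 1) * ‖μk k i b‖ ≤ 1 * C := by
          apply mul_le_mul h2 _ (norm_nonneg _) zero_le_one
          rw [hμk]; exact hC _ _
    _ = C := one_mul C
  have hTC : ∀ k i, ‖T k i‖ ≤ C := fun k i =>
    norm_sum_le_of_forall_le_of_nonneg hC0 (fun b _ => htermC k i b)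
  have hJtend : ∀ k, Tendsto (fun n => T k n) atTop (nhds (J k)) := hJ
  have hJC : ∀ k, ‖J k‖ ≤ C := fun k =>
    le_of_tendsto (hJtend k).norm (Eventually.of_forall fun n => hTC k n)
  -- summability
  have hterm0 : Tendsto (fun k => (p : K) ^ (k * (m - 1)) * J k) atTop (nhds 0) := by
    refine squeeze_zero_norm (a := fun k => ‖(p : K)‖ ^ k * C) ?_ ?_
    · intro k
      rw [norm_mul]
      exact mul_le_mul (hppow k) (hJC k) (norm_nonneg _)
        (pow_nonneg (norm_nonneg _) _)
    · simpa using (tendsto_pow_atTop_nhds_zero_of_lt_one (norm_nonneg _) hpn).mul_const C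
  have hsummable : Summable (fun k => (p : K) ^ (k * (m - 1)) * J k) :=
    NonarchimedeanAddGroup.summable_of_tendsto_cofinite_zero
      (by rwa [Nat.cofinite_eq_atTop])
  -- partial sums tend to I
  have hPI : Tendsto (fun N => ∑ k ∈ Finset.range N, (p : K) ^ (k * (m - 1)) * J k)
      atTop (nhds I) := by
    rw [NormedAddCommGroup.tendsto_atTop]
    intro ε hε
    set C' := max C 1 with hC'def
    have hCC' : C ≤ C' := le_max_left _ _
    have hC'0 : (0:ℝ) < C' := lt_of_lt_of_le one_pos (le_max_right _ _)
    have htd : Tendsto (fun N => ‖(p : K)‖ ^ N * C') atTop (nhds 0) := by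
      simpa using (tendsto_pow_atTop_nhds_zero_of_lt_one (norm_nonneg _) hpn).mul_const C'
    obtain ⟨N₀, hN₀⟩ := Metric.tendsto_atTop.mp htd ε hε
    refine ⟨N₀, fun N hN => ?_⟩
    obtain ⟨M, hM⟩ := NormedAddCommGroup.tendsto_atTop.mp hI ε hε
    have h1 : ∀ᶠ n in atTop,
        ‖(∑ a ∈ Finset.range (p ^ n), (a : K) ^ (m - 1) * μ n a) - I‖ < ε :=
      eventually_atTop.2 ⟨M, hM⟩
    have h2 : ∀ᶠ n in atTop, ∀ k ∈ Finset.range N, ‖J k - T k (n - k)‖ < ε / 2 := by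
      rw [eventually_all_finset]
      intro k _
      have hTk : Tendsto (fun n => T k (n - k)) atTop (nhds (J k)) :=
        (hJtend k).comp (tendsto_sub_atTop_nat k)
      have hb : ∀ᶠ x in nhds (J k), ‖J k - x‖ < ε / 2 := by
        have : Metric.ball (J k) (ε / 2) ∈ nhds (J k) :=
          Metric.ball_mem_nhds _ (by positivity)
        filter_upwards [this] with x hx
        rw [Metric.mem_ball, dist_eq_norm] at hx
        rwa [norm_sub_rev]
      exact hTk.eventually hb
    have h3 : ∀ᶠ n in atTop, N ≤ n := eventually_ge_atTop N
    obtain ⟨n, hn1, hn2, hn3⟩ := (h1.and (h2.and h3)).exists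
    -- decomposition identity
    have hsplit : ∑ k ∈ Finset.range n, (p : K) ^ (k * (m - 1)) * T k (n - k)
        = (∑ k ∈ Finset.range N, (p : K) ^ (k * (m - 1)) * T k (n - k))
          + ∑ k ∈ Finset.Ico N n, (p : K) ^ (k * (m - 1)) * T k (n - k) := by
      rw [Finset.range_eq_Ico, Finset.range_eq_Ico]
      exact (Finset.sum_Ico_consecutive (fun k => (p : K) ^ (k * (m - 1)) * T k (n - k)) (Nat.zero_le N) hn3).symm
    have e1 : ∑ k ∈ Finset.range N, (p : K) ^ (k * (m - 1)) * (J k - T k (n - k))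
        = (∑ k ∈ Finset.range N, (p : K) ^ (k * (m - 1)) * J k)
          - ∑ k ∈ Finset.range N, (p : K) ^ (k * (m - 1)) * T k (n - k) := by
      rw [← Finset.sum_sub_distrib]
      exact Finset.sum_congr rfl fun k _ => mul_sub _ _ _
    have hkey : (∑ k ∈ Finset.range N, (p : K) ^ (k * (m - 1)) * J k) - I
        = ((∑ k ∈ Finset.range N, (p : K) ^ (k * (m - 1)) * (J k - T k (n - k)))
            + (- ∑ k ∈ Finset.Ico N n, (p : K) ^ (k * (m - 1)) * T k (n - k)))
          + ((∑ a ∈ Finset.range (p ^ n), (a : K) ^ (m - 1) * μ n a) - I) := by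
      rw [e1, hSn n, hsplit]
      ring
    rw [hkey]
    refine lt_of_le_of_lt (norm_add_le_max _ _) (max_lt (lt_of_le_of_lt (norm_add_le_max _ _)
      (max_lt ?_ ?_)) hn1)
    · -- first block: ≤ ε/2 < ε
      refine lt_of_le_of_lt (norm_sum_le_of_forall_le_of_nonneg (by positivity) ?_)
        (half_lt_self hε)
      intro k hk
      rw [norm_mul]
      calc ‖(p : K) ^ (k * (m - 1))‖ * ‖J k - T k (n - k)‖
          ≤ 1 * (ε / 2) := by
            apply mul_le_mul _ (hn2 k hk).le (norm_nonneg _) zero_le_one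
            rw [norm_pow]
            exact pow_le_one₀ (norm_nonneg _) hp1
      _ = ε / 2 := one_mul _
    · -- second block
      rw [norm_neg]
      have hB := hN₀ N hN
      rw [Real.dist_eq, sub_zero, abs_of_nonneg (by positivity)] at hB
      refine lt_of_le_of_lt (norm_sum_le_of_forall_le_of_nonneg (by positivity) ?_) hB
      intro k hk
      rw [Finset.mem_Ico] at hk
      rw [norm_mul]
      apply mul_le_mul _ ((hTC _ _).trans hCC') (norm_nonneg _)
        (pow_nonneg (norm_nonneg _) _)
      rw [norm_pow]
      exact pow_le_pow_of_le_one (norm_nonneg _) hp1 (le_trans hk.1 (hkq k))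
  -- conclude
  have := hsummable.hasSum
  have hts : Tendsto (fun N => ∑ k ∈ Finset.range N, (p : K) ^ (k * (m - 1)) * J k)
      atTop (nhds (∑' k, (p : K) ^ (k * (m - 1)) * J k)) := this.tendsto_sum_nat
  have hIeq : (∑' k, (p : K) ^ (k * (m - 1)) * J k) = I := tendsto_nhds_unique hts hPI
  rwa [hIeq] at this
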